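/- In two-color FLAG COLORING, the Grundy value of the properly 2-colored path graph with x edges (i.e., P_{x+1}, the path on x+1 vertices) is x mod 3. -/

import Mathlib

/-- The minimum excludant of a set of naturals. -/
noncomputable def mexN (S : Set ℕ) : ℕ := sInf {n | n ∉ S}

namespace FlagColoring

variable {V : Type} {C : Type}

/-- The subgraph of `G` induced by the color class `c` of the coloring `f`
(as a graph on the same vertex set). -/
def colorSub (G : SimpleGraph V) (f : V → C) (c : C) : SimpleGraph V where
  Adj u w := G.Adj u w ∧ f u = c ∧ f w = c
  symm := ⟨fun _ _ h => ⟨G.adj_symm h.1, h.2.2, h.2.1⟩⟩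
  loopless := ⟨fun _ h => G.irrefl h.1⟩

open Classical in
/-- One move of FLAG COLORING on the graph `G`: choose a vertex `v` and a color `c'`
different from the color `f v` of `v` and appearing on some neighbor of `v`, and recolor
the whole connected monochromatic component of `v` (its component in the subgraph induced
by the vertices of color `f v`) with `c'`. -/
def Move (G : SimpleGraph V) (f g : V → C) : Prop :=
  ∃ v c', c' ≠ f v ∧ (∃ u, G.Adj v u ∧ f u = c') ∧
    g = fun w => if (colorSub G f (f v)).Reachable v w then c' else f w

open Classical in
/-- The number of ordered pairs of adjacent, differently colored vertices.
Every move strictly decreases this quantity, so it bounds the length of play. -/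
noncomputable def boundary [Fintype V] (G : SimpleGraph V) (f : V → C) : ℕ :=
  (Finset.univ.filter (fun p : V × V => G.Adj p.1 p.2 ∧ f p.1 ≠ f p.2)).card

/-- Grundy value computation with fuel. -/
noncomputable def grundyAux (G : SimpleGraph V) : ℕ → (V → C) → ℕ
  | 0, _ => 0
  | (n+1), f => mexN {k | ∃ g, Move G f g ∧ grundyAux G n g = k}

/-- The Grundy value (nimber) of the FLAG COLORING position `(G, f)`. Since every move
strictly decreases `boundary`, fuel `boundary G f + 1` suffices to compute the true
Grundy value: the mex of the Grundy values of the options (`0` if there are no options).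
A position is a P-position exactly when its Grundy value is `0`. -/
noncomputable def grundy [Fintype V] (G : SimpleGraph V) (f : V → C) : ℕ :=
  grundyAux G (boundary G f + 1) f

end FlagColoring

/-- The path graph with `x` edges on `x + 1` vertices. -/
def pathGraph (x : ℕ) : SimpleGraph (Fin (x + 1)) :=
  SimpleGraph.fromRel (fun u v => (u : ℕ) + 1 = (v : ℕ))

/-- The proper 2-coloring of the path by parity of position. -/
def pathColor (x : ℕ) : Fin (x + 1) → Bool := fun v => decide ((v : ℕ) % 2 = 0)

-- ===================== auxiliary development =====================
namespace PathProof
open FlagColoring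

variable {x : ℕ}

lemma pg_adj {u v : Fin (x+1)} :
    (pathGraph x).Adj u v ↔ ((u:ℕ)+1 = v ∨ (v:ℕ)+1 = u) := by
  constructor
  · rintro ⟨-, h⟩; exact h
  · intro h
    refine ⟨fun he => ?_, h⟩
    subst he; omega

lemma cs_adj {f : Fin (x+1) → Bool} {c : Bool} {u w : Fin (x+1)} :
    (colorSub (pathGraph x) f c).Adj u w ↔ (pathGraph x).Adj u w ∧ f u = c ∧ f w = c :=
  Iff.rfl

/-- block membership predicate -/
def inB (f : Fin (x+1) → Bool) (v w : Fin (x+1)) : Prop :=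
  ∀ i : Fin (x+1), min (v:ℕ) (w:ℕ) ≤ (i:ℕ) → (i:ℕ) ≤ max (v:ℕ) (w:ℕ) → f i = f v

lemma inB_self (f : Fin (x+1) → Bool) (v : Fin (x+1)) : inB f v v := by
  intro i h1 h2
  have : i = v := Fin.ext (by omega)
  rw [this]

lemma inB_color {f : Fin (x+1) → Bool} {v w : Fin (x+1)} (h : inB f v w) : f w = f v :=
  h w (by omega) (by omega)

/-- walks only step by one, forward direction helper -/
lemma walk_ivt {f : Fin (x+1) → Bool} {c : Bool} {v w : Fin (x+1)}
    (W : (colorSub (pathGraph x) f c).Walk v w) :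
    ∀ i : Fin (x+1), min (v:ℕ) (w:ℕ) ≤ i → (i:ℕ) ≤ max (v:ℕ) (w:ℕ) → f i = f v := by
  induction W with
  | @nil a =>
    intro i h1 h2
    have : i = a := Fin.ext (by omega)
    rw [this]
  | @cons a b d hadj W ih =>
    intro i h1 h2
    obtain ⟨hab, hfa, hfb⟩ := hadj
    rw [pg_adj] at hab
    by_cases hia : i = a
    · rw [hia]
    · have hia' : (i:ℕ) ≠ (a:ℕ) := fun h => hia (Fin.ext h)
      have := ih i (by omega) (by omega)
      rw [this, hfb, hfa]

lemma reach_of_const_aux (f : Fin (x+1) → Bool) :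
    ∀ d (v w : Fin (x+1)), (w:ℕ) = (v:ℕ) + d →
    (∀ i : Fin (x+1), (v:ℕ) ≤ i → (i:ℕ) ≤ w → f i = f v) →
    (colorSub (pathGraph x) f (f v)).Reachable v w := by
  intro d
  induction d with
  | zero =>
    intro v w h _
    have : w = v := Fin.ext (by omega)
    rw [this]
  | succ d ih =>
    intro v w h hc
    have hvx : (v:ℕ) + 1 ≤ x := by omega
    set v' : Fin (x+1) := ⟨(v:ℕ)+1, by omega⟩ with hv'
    have hfv' : f v' = f v := hc v' (by simp [hv']) (by simp [hv']; omega)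
    have hadj : (colorSub (pathGraph x) f (f v)).Adj v v' := by
      refine ⟨pg_adj.2 (Or.inl rfl), rfl, hfv'⟩
    have hr : (colorSub (pathGraph x) f (f v')).Reachable v' w := by
      apply ih v' w (by simp [hv']; omega)
      intro i hi1 hi2
      rw [hfv']
      exact hc i (by simp [hv'] at hi1; omega) hi2
    rw [hfv'] at hr
    exact hadj.reachable.trans hr

lemma reach_iff_inB {f : Fin (x+1) → Bool} {v w : Fin (x+1)} :
    (colorSub (pathGraph x) f (f v)).Reachable v w ↔ inB f v w := by
  constructor
  · intro ⟨W⟩ i h1 h2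
    exact walk_ivt W i h1 h2
  · intro h
    rcases le_or_gt (v:ℕ) (w:ℕ) with hle | hlt
    · apply reach_of_const_aux f ((w:ℕ) - (v:ℕ)) v w (by omega)
      intro i h1 h2
      exact h i (by omega) (by omega)
    · have hfw : f w = f v := inB_color h
      have hr : (colorSub (pathGraph x) f (f w)).Reachable w v := by
        apply reach_of_const_aux f ((v:ℕ) - (w:ℕ)) w v (by omega)
        intro i h1 h2
        rw [hfw]
        exact h i (by omega) (by omega)
      rw [hfw] at hr
      exact hr.symm

/-- number of bichromatic edges -/
def chg (f : Fin (x+1) → Bool) : ℕ :=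
  (Finset.univ.filter (fun i : Fin x => f i.castSucc ≠ f i.succ)).card

open Classical in
/-- recoloring from a move at `v` -/
noncomputable def newC (f : Fin (x+1) → Bool) (v : Fin (x+1)) : Fin (x+1) → Bool :=
  fun w => if inB f v w then !(f v) else f w

lemma move_iff {f g : Fin (x+1) → Bool} :
    Move (pathGraph x) f g ↔
      ∃ v : Fin (x+1), (∃ u, (pathGraph x).Adj v u ∧ f u ≠ f v) ∧ g = newC f v := by
  classical
  constructor
  · rintro ⟨v, c', hne, ⟨u, hadj, hfu⟩, rfl⟩
    have hc' : c' = !(f v) := by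
      revert hne; cases c' <;> cases f v <;> simp
    refine ⟨v, ⟨u, hadj, by rw [hfu, hc']; cases f v <;> simp⟩, ?_⟩
    funext w
    simp only [newC, hc']
    by_cases h : inB f v w
    · rw [if_pos h, if_pos (reach_iff_inB.2 h)]
    · rw [if_neg h, if_neg (fun hr => h (reach_iff_inB.1 hr))]
  · rintro ⟨v, ⟨u, hadj, hfu⟩, rfl⟩
    refine ⟨v, !(f v), by cases f v <;> simp, ⟨u, hadj, ?_⟩, ?_⟩
    · revert hfu; cases f u <;> cases f v <;> simp
    · funext w
      simp only [newC]
      by_cases h : inB f v w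
      · rw [if_pos h, if_pos (reach_iff_inB.2 h)]
      · rw [if_neg h, if_neg (fun hr => h (reach_iff_inB.1 hr))]

lemma inB_sub {f : Fin (x+1) → Bool} {v w u : Fin (x+1)} (h : inB f v w)
    (h1 : min (v:ℕ) (w:ℕ) ≤ u) (h2 : (u:ℕ) ≤ max (v:ℕ) (w:ℕ)) : inB f v u := by
  intro i hi1 hi2
  exact h i (by omega) (by omega)

/-- right boundary edge of the block of `v` -/
def isR (f : Fin (x+1) → Bool) (v : Fin (x+1)) (i : Fin x) : Prop :=
  inB f v i.castSucc ∧ ¬ inB f v i.succ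

/-- left boundary edge of the block of `v` -/
def isL (f : Fin (x+1) → Bool) (v : Fin (x+1)) (i : Fin x) : Prop :=
  ¬ inB f v i.castSucc ∧ inB f v i.succ

lemma isR_ge {f : Fin (x+1) → Bool} {v : Fin (x+1)} {i : Fin x} (h : isR f v i) :
    (v:ℕ) ≤ (i:ℕ) := by
  by_contra hlt
  push_neg at hlt
  exact h.2 (inB_sub h.1 (by simp only [Fin.coe_castSucc, Fin.val_succ]; omega) (by simp only [Fin.coe_castSucc, Fin.val_succ]; omega))

lemma isR_ne {f : Fin (x+1) → Bool} {v : Fin (x+1)} {i : Fin x} (h : isR f v i) :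
    f i.succ ≠ f v := by
  have hvi := isR_ge h
  intro heq
  apply h.2
  intro j hj1 hj2
  simp only [Fin.val_succ] at hj1 hj2
  rcases Nat.lt_or_ge (j:ℕ) ((i:ℕ)+1) with hlt | hge
  · exact h.1 j (by simp only [Fin.coe_castSucc, Fin.val_succ]; omega) (by simp only [Fin.coe_castSucc, Fin.val_succ]; omega)
  · have : j = i.succ := Fin.ext (by simp only [Fin.coe_castSucc, Fin.val_succ]; omega)
    rw [this, heq]

lemma isL_le {f : Fin (x+1) → Bool} {v : Fin (x+1)} {i : Fin x} (h : isL f v i) :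
    (i:ℕ) + 1 ≤ (v:ℕ) := by
  by_contra hlt
  push_neg at hlt
  exact h.1 (inB_sub h.2 (by simp only [Fin.coe_castSucc, Fin.val_succ]; omega) (by simp only [Fin.coe_castSucc, Fin.val_succ]; omega))

lemma isL_ne {f : Fin (x+1) → Bool} {v : Fin (x+1)} {i : Fin x} (h : isL f v i) :
    f i.castSucc ≠ f v := by
  have hvi := isL_le h
  intro heq
  apply h.1
  intro j hj1 hj2
  simp only [Fin.coe_castSucc] at hj1 hj2
  rcases Nat.lt_or_ge ((i:ℕ)) (j:ℕ) with hlt | hge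
  · exact h.2 j (by simp only [Fin.coe_castSucc, Fin.val_succ]; omega) (by simp only [Fin.coe_castSucc, Fin.val_succ]; omega)
  · have : j = i.castSucc := Fin.ext (by simp only [Fin.coe_castSucc, Fin.val_succ]; omega)
    rw [this, heq]

lemma isR_unique {f : Fin (x+1) → Bool} {v : Fin (x+1)} {i i' : Fin x}
    (h : isR f v i) (h' : isR f v i') : i = i' := by
  rcases Nat.lt_trichotomy (i:ℕ) (i':ℕ) with hlt | heq | hgt
  · exact absurd (h'.1 i.succ (by simp only [Fin.coe_castSucc, Fin.val_succ]; have := isR_ge h; omega) (by simp only [Fin.coe_castSucc, Fin.val_succ]; omega)) (isR_ne h)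
  · exact Fin.ext heq
  · exact absurd (h.1 i'.succ (by simp only [Fin.coe_castSucc, Fin.val_succ]; have := isR_ge h'; omega) (by simp only [Fin.coe_castSucc, Fin.val_succ]; omega)) (isR_ne h')

lemma isL_unique {f : Fin (x+1) → Bool} {v : Fin (x+1)} {i i' : Fin x}
    (h : isL f v i) (h' : isL f v i') : i = i' := by
  rcases Nat.lt_trichotomy (i:ℕ) (i':ℕ) with hlt | heq | hgt
  · exact absurd (h.2 i'.castSucc (by simp only [Fin.coe_castSucc, Fin.val_succ]; omega) (by simp only [Fin.coe_castSucc, Fin.val_succ]; have := isL_le h'; omega)) (isL_ne h')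
  · exact Fin.ext heq
  · exact absurd (h'.2 i.castSucc (by simp only [Fin.coe_castSucc, Fin.val_succ]; omega) (by simp only [Fin.coe_castSucc, Fin.val_succ]; have := isL_le h; omega)) (isL_ne h)

open Classical in
/-- set of boundary edges of the block of `v` -/
noncomputable def bdryset (f : Fin (x+1) → Bool) (v : Fin (x+1)) : Finset (Fin x) :=
  Finset.univ.filter (fun i => isR f v i ∨ isL f v i)

open Classical in
lemma mem_bdryset {f : Fin (x+1) → Bool} {v : Fin (x+1)} {i : Fin x} :
    i ∈ bdryset f v ↔ isR f v i ∨ isL f v i := by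
  simp [bdryset]

open Classical in
/-- set of bichromatic edges -/
noncomputable def chgset (f : Fin (x+1) → Bool) : Finset (Fin x) :=
  Finset.univ.filter (fun i => f i.castSucc ≠ f i.succ)

open Classical in
lemma mem_chgset {f : Fin (x+1) → Bool} {i : Fin x} :
    i ∈ chgset f ↔ f i.castSucc ≠ f i.succ := by
  simp [chgset]

lemma chg_eq_card_chgset (f : Fin (x+1) → Bool) : chg f = (chgset f).card := by
  classical
  unfold chg chgset
  congr 1

lemma bdryset_subset {f : Fin (x+1) → Bool} {v : Fin (x+1)} :
    bdryset f v ⊆ chgset f := by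
  intro i hi
  rw [mem_bdryset] at hi
  rw [mem_chgset]
  rcases hi with h | h
  · rw [inB_color h.1]
    exact fun he => isR_ne h he.symm
  · rw [inB_color h.2]
    exact fun he => isL_ne h he

lemma newC_change_iff {f : Fin (x+1) → Bool} {v : Fin (x+1)} {i : Fin x} :
    (newC f v i.castSucc ≠ newC f v i.succ) ↔
      (f i.castSucc ≠ f i.succ) ∧ i ∉ bdryset f v := by
  classical
  rw [mem_bdryset]
  by_cases h1 : inB f v i.castSucc <;> by_cases h2 : inB f v i.succ <;>
    simp only [newC, if_pos, if_neg, h1, h2, if_true, if_false, ite_true, ite_false]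
  · simp [inB_color h1, inB_color h2]
  · have hne : f i.succ ≠ f v := isR_ne ⟨h1, h2⟩
    have : f i.succ = !(f v) := by revert hne; cases f i.succ <;> cases f v <;> simp
    simp [this, isR, isL, h1, h2]
  · have hne : f i.castSucc ≠ f v := isL_ne ⟨h1, h2⟩
    have : f i.castSucc = !(f v) := by revert hne; cases f i.castSucc <;> cases f v <;> simp
    simp [this, isR, isL, h1, h2]
  · simp [isR, isL, h1, h2]

lemma chgset_newC {f : Fin (x+1) → Bool} {v : Fin (x+1)} :
    chgset (newC f v) = chgset f \ bdryset f v := by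
  ext i
  rw [mem_chgset, Finset.mem_sdiff, mem_chgset, newC_change_iff]

lemma chg_newC {f : Fin (x+1) → Bool} {v : Fin (x+1)} :
    chg (newC f v) = chg f - (bdryset f v).card := by
  rw [chg_eq_card_chgset, chg_eq_card_chgset, chgset_newC,
    Finset.card_sdiff_of_subset bdryset_subset]

lemma card_bdryset_le_two (f : Fin (x+1) → Bool) (v : Fin (x+1)) :
    (bdryset f v).card ≤ 2 := by
  classical
  have : (bdryset f v).card ≤ (Finset.univ : Finset Bool).card := by
    apply Finset.card_le_card_of_injOn (fun i => decide (isR f v i))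
    · intro _ _; exact Finset.mem_univ _
    · intro a ha b hb hab
      simp only [Finset.mem_coe, mem_bdryset] at ha hb
      simp only [decide_eq_decide] at hab
      by_cases hra : isR f v a
      · exact isR_unique hra (hab.1 hra)
      · have hla : isL f v a := ha.resolve_left hra
        have hrb : ¬ isR f v b := fun h => hra (hab.2 h)
        exact isL_unique hla (hb.resolve_left hrb)
  simpa using this

lemma card_bdryset_pos {f : Fin (x+1) → Bool} {v u : Fin (x+1)}
    (hadj : (pathGraph x).Adj v u) (hne : f u ≠ f v) :
    0 < (bdryset f v).card := by
  rw [Finset.card_pos]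
  rw [pg_adj] at hadj
  rcases hadj with h | h
  · have hvx : (v:ℕ) < x := by omega
    refine ⟨⟨(v:ℕ), hvx⟩, mem_bdryset.2 (Or.inl ⟨?_, ?_⟩)⟩
    · have : Fin.castSucc ⟨(v:ℕ), hvx⟩ = v := Fin.ext (by simp)
      rw [this]; exact inB_self f v
    · have : Fin.succ ⟨(v:ℕ), hvx⟩ = u := Fin.ext (by simp [h])
      rw [this]; exact fun hB => hne (inB_color hB)
  · have hux : (u:ℕ) < x := by omega
    refine ⟨⟨(u:ℕ), hux⟩, mem_bdryset.2 (Or.inr ⟨?_, ?_⟩)⟩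
    · have : Fin.castSucc ⟨(u:ℕ), hux⟩ = u := Fin.ext (by simp)
      rw [this]; exact fun hB => hne (inB_color hB)
    · have : Fin.succ ⟨(u:ℕ), hux⟩ = v := Fin.ext (by simp [h])
      rw [this]; exact inB_self f v

lemma const_of_no_change (f : Fin (x+1) → Bool) :
    ∀ d (a b : Fin (x+1)), (b:ℕ) = (a:ℕ) + d →
    (∀ j : Fin x, (a:ℕ) ≤ j → (j:ℕ) < (b:ℕ) → f j.castSucc = f j.succ) →
    f b = f a := by
  intro d
  induction d with
  | zero =>
    intro a b h _
    have : b = a := Fin.ext (by omega)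
    rw [this]
  | succ d ih =>
    intro a b h hc
    have hbx : (b:ℕ) - 1 < x := by omega
    set j : Fin x := ⟨(b:ℕ)-1, hbx⟩ with hj
    have h1 : f j.castSucc = f j.succ := hc j (by simp [hj]; omega) (by show (b:ℕ) - 1 < (b:ℕ); omega)
    have h2 : j.succ = b := Fin.ext (by simp [hj]; omega)
    have h3 : f j.castSucc = f a := by
      apply ih a j.castSucc (by simp [hj]; omega)
      intro j' hj1 hj2
      exact hc j' hj1 (by simp [hj] at hj2; omega)
    rw [← h2, ← h1, h3]

lemma inB_of_no_change {f : Fin (x+1) → Bool} {v w : Fin (x+1)}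
    (h : ∀ j : Fin x, min (v:ℕ) (w:ℕ) ≤ (j:ℕ) → (j:ℕ) + 1 ≤ max (v:ℕ) (w:ℕ) →
      f j.castSucc = f j.succ) : inB f v w := by
  intro i hi1 hi2
  rcases le_total (v:ℕ) (i:ℕ) with hle | hle
  · apply const_of_no_change f ((i:ℕ) - (v:ℕ)) v i (by omega)
    intro j hj1 hj2
    exact h j (by omega) (by omega)
  · exact (const_of_no_change f ((v:ℕ) - (i:ℕ)) i v (by omega)
      (fun j hj1 hj2 => h j (by omega) (by omega))).symm

lemma no_move_of_chg_zero {f : Fin (x+1) → Bool} (h : chg f = 0) (g : Fin (x+1) → Bool) :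
    ¬ Move (pathGraph x) f g := by
  classical
  rw [move_iff]
  rintro ⟨v, ⟨u, hadj, hne⟩, -⟩
  rw [chg_eq_card_chgset, Finset.card_eq_zero] at h
  rw [pg_adj] at hadj
  rcases hadj with ha | ha
  · have hvx : (v:ℕ) < x := by omega
    have : (⟨(v:ℕ), hvx⟩ : Fin x) ∈ chgset f := by
      rw [mem_chgset]
      have e1 : Fin.castSucc ⟨(v:ℕ), hvx⟩ = v := Fin.ext (by simp)
      have e2 : Fin.succ ⟨(v:ℕ), hvx⟩ = u := Fin.ext (by simp [ha])
      rw [e1, e2]; exact fun he => hne he.symm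
    rw [h] at this; exact absurd this (Finset.notMem_empty _)
  · have hux : (u:ℕ) < x := by omega
    have : (⟨(u:ℕ), hux⟩ : Fin x) ∈ chgset f := by
      rw [mem_chgset]
      have e1 : Fin.castSucc ⟨(u:ℕ), hux⟩ = u := Fin.ext (by simp)
      have e2 : Fin.succ ⟨(u:ℕ), hux⟩ = v := Fin.ext (by simp [ha])
      rw [e1, e2]; exact hne
    rw [h] at this; exact absurd this (Finset.notMem_empty _)

lemma exists_move_sub_one {f : Fin (x+1) → Bool} (hk : 0 < chg f) :
    ∃ g, Move (pathGraph x) f g ∧ chg g = chg f - 1 := by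
  classical
  have hne : (chgset f).Nonempty := by
    rw [← Finset.card_pos, ← chg_eq_card_chgset]; exact hk
  set i0 := (chgset f).min' hne with hi0
  have hch : f i0.castSucc ≠ f i0.succ := mem_chgset.1 ((chgset f).min'_mem hne)
  set v := i0.castSucc with hv
  refine ⟨newC f v, move_iff.2 ⟨v, ⟨i0.succ, pg_adj.2 (Or.inl (by simp [hv])),
    fun he => hch he.symm⟩, rfl⟩, ?_⟩
  rw [chg_newC]
  have hR : isR f v i0 := by
    constructor
    · rw [← hv]; exact inB_self f v
    · exact fun hB => hch (inB_color hB).symm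
  have : bdryset f v = {i0} := by
    ext j
    rw [mem_bdryset, Finset.mem_singleton]
    constructor
    · rintro (hj | hj)
      · exact isR_unique hj hR
      · exfalso
        have h1 : (j:ℕ) + 1 ≤ (v:ℕ) := isL_le hj
        have h2 : i0 ≤ j := (chgset f).min'_le j (bdryset_subset (mem_bdryset.2 (Or.inr hj)))
        have : (i0:ℕ) ≤ (j:ℕ) := h2
        simp only [hv, Fin.coe_castSucc] at h1
        omega
    · rintro rfl; exact Or.inl hR
  rw [this]
  simp

lemma exists_move_sub_two {f : Fin (x+1) → Bool} (hk : 2 ≤ chg f) :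
    ∃ g, Move (pathGraph x) f g ∧ chg g = chg f - 2 := by
  classical
  have hcard : 2 ≤ (chgset f).card := by rw [← chg_eq_card_chgset]; exact hk
  have hne : (chgset f).Nonempty := Finset.card_pos.1 (by omega)
  set i0 := (chgset f).min' hne with hi0
  have hi0m : i0 ∈ chgset f := (chgset f).min'_mem hne
  obtain ⟨e, hem, hene⟩ := Finset.exists_mem_ne (s := chgset f) (by omega) i0
  have hS : ((chgset f).filter (fun j => i0 < j)).Nonempty := by
    refine ⟨e, Finset.mem_filter.2 ⟨hem, ?_⟩⟩
    exact lt_of_le_of_ne ((chgset f).min'_le e hem) (Ne.symm hene)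
  set S := (chgset f).filter (fun j => i0 < j) with hSdef
  set i1 := S.min' hS with hi1
  have hi1m : i1 ∈ S := S.min'_mem hS
  have hi1c : i1 ∈ chgset f := (Finset.mem_filter.1 hi1m).1
  have hi01 : (i0:ℕ) < (i1:ℕ) := (Finset.mem_filter.1 hi1m).2
  have hch0 : f i0.castSucc ≠ f i0.succ := mem_chgset.1 hi0m
  have hch1 : f i1.castSucc ≠ f i1.succ := mem_chgset.1 hi1c
  set v := i0.succ with hv
  have hvval : (v:ℕ) = (i0:ℕ) + 1 := by simp [hv]
  -- no change edges strictly between i0 and i1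
  have hnochg : ∀ j : Fin x, (i0:ℕ) < (j:ℕ) → (j:ℕ) < (i1:ℕ) → f j.castSucc = f j.succ := by
    intro j hj1 hj2
    by_contra hc
    have : j ∈ S := Finset.mem_filter.2 ⟨mem_chgset.2 hc, hj1⟩
    have := S.min'_le j this
    have : (i1:ℕ) ≤ (j:ℕ) := this
    omega
  refine ⟨newC f v, move_iff.2 ⟨v, ⟨i0.castSucc, pg_adj.2 (Or.inr (by simp [hv])),
    hch0⟩, rfl⟩, ?_⟩
  rw [chg_newC]
  have hinB1 : inB f v i1.castSucc := by
    apply inB_of_no_change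
    intro j hj1 hj2
    simp only [hvval, Fin.coe_castSucc] at hj1 hj2
    exact hnochg j (by omega) (by omega)
  have hfc1 : f i1.castSucc = f v := inB_color hinB1
  have hL : isL f v i0 := by
    constructor
    · exact fun hB => hch0 (inB_color hB)
    · rw [← hv]; exact inB_self f v
  have hR : isR f v i1 := by
    refine ⟨hinB1, fun hB => ?_⟩
    exact hch1 (by rw [hfc1, inB_color hB])
  have hbd : bdryset f v = {i0, i1} := by
    ext j
    rw [mem_bdryset, Finset.mem_insert, Finset.mem_singleton]
    constructor
    · rintro (hj | hj)
      · exact Or.inr (isR_unique hj hR)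
      · exact Or.inl (isL_unique hj hL)
    · rintro (rfl | rfl)
      · exact Or.inr hL
      · exact Or.inl hR
  rw [hbd]
  have hne01 : i0 ≠ i1 := fun he => by rw [he] at hi01; omega
  rw [Finset.card_insert_of_notMem (by simpa using hne01), Finset.card_singleton]

lemma mexN_empty : mexN (∅ : Set ℕ) = 0 := by
  rw [mexN]
  have : {n : ℕ | n ∉ (∅ : Set ℕ)} = Set.univ := by simp
  rw [this]
  simp [Nat.sInf_eq_zero]

lemma mexN_eq {S : Set ℕ} {a : ℕ} (ha : a ∉ S) (hb : ∀ b < a, b ∈ S) : mexN S = a := by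
  rw [mexN]
  refine le_antisymm (Nat.sInf_le ha) (le_csInf ⟨a, ha⟩ ?_)
  intro b hbn
  by_contra hlt
  push_neg at hlt
  exact hbn (hb b hlt)

lemma mex_pair (k : ℕ) (hk : 2 ≤ k) :
    mexN {(k-1) % 3, (k-2) % 3} = k % 3 := by
  have h3 : k % 3 = 0 ∨ k % 3 = 1 ∨ k % 3 = 2 := by omega
  rcases h3 with h | h | h
  · have e1 : (k-1) % 3 = 2 := by omega
    have e2 : (k-2) % 3 = 1 := by omega
    rw [e1, e2, h]
    exact mexN_eq (by simp) (by omega)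
  · have e1 : (k-1) % 3 = 0 := by omega
    have e2 : (k-2) % 3 = 2 := by omega
    rw [e1, e2, h]
    exact mexN_eq (by simp) (by intro b hb; interval_cases b <;> simp)
  · have e1 : (k-1) % 3 = 1 := by omega
    have e2 : (k-2) % 3 = 0 := by omega
    rw [e1, e2, h]
    exact mexN_eq (by simp) (by intro b hb; interval_cases b <;> simp)

lemma mexN_singleton_zero : mexN ({0} : Set ℕ) = 1 :=
  mexN_eq (by simp) (by intro b hb; interval_cases b; simp)

lemma move_chg {f g : Fin (x+1) → Bool} (h : Move (pathGraph x) f g) :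
    (chg g = chg f - 1 ∨ chg g = chg f - 2) ∧ chg g < chg f := by
  obtain ⟨v, ⟨u, hadj, hne⟩, rfl⟩ := move_iff.1 h
  have h1 : 0 < (bdryset f v).card := card_bdryset_pos hadj hne
  have h2 : (bdryset f v).card ≤ 2 := card_bdryset_le_two f v
  have h3 : (bdryset f v).card ≤ chg f := by
    rw [chg_eq_card_chgset]; exact Finset.card_le_card bdryset_subset
  have h4 := chg_newC (f := f) (v := v)
  omega

lemma key : ∀ n (f : Fin (x+1) → Bool), chg f ≤ n →
    grundyAux (pathGraph x) (n+1) f = chg f % 3 := by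
  intro n
  induction n using Nat.strong_induction_on with
  | _ n ih =>
    intro f hf
    rw [grundyAux]
    rcases Nat.eq_zero_or_pos (chg f) with hc | hc
    · have hS : {k | ∃ g, Move (pathGraph x) f g ∧ grundyAux (pathGraph x) n g = k} = ∅ := by
        ext r
        simp only [Set.mem_setOf_eq, Set.mem_empty_iff_false, iff_false, not_exists]
        exact fun g hg => absurd hg.1 (no_move_of_chg_zero hc g)
      rw [hS, mexN_empty, hc]
    · obtain ⟨m, rfl⟩ : ∃ m, n = m + 1 := ⟨n - 1, by omega⟩
      have hopt : ∀ g, Move (pathGraph x) f g →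
          grundyAux (pathGraph x) (m+1) g = chg g % 3 := by
        intro g hg
        exact ih m (by omega) g (by have := (move_chg hg).2; omega)
      rcases Nat.lt_or_ge (chg f) 2 with h2 | h2
      · -- chg f = 1
        have hc1 : chg f = 1 := by omega
        have hS : {k | ∃ g, Move (pathGraph x) f g ∧ grundyAux (pathGraph x) (m+1) g = k}
            = {0} := by
          ext r
          simp only [Set.mem_setOf_eq, Set.mem_singleton_iff]
          constructor
          · rintro ⟨g, hg, rfl⟩
            rw [hopt g hg]
            have := (move_chg hg).1
            have : chg g = 0 := by omega
            simp [this]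
          · rintro rfl
            obtain ⟨g, hg, hcg⟩ := exists_move_sub_one hc
            exact ⟨g, hg, by rw [hopt g hg, hcg, hc1]⟩
        rw [hS, mexN_singleton_zero, hc1]
      · -- chg f ≥ 2
        have hS : {k | ∃ g, Move (pathGraph x) f g ∧ grundyAux (pathGraph x) (m+1) g = k}
            = {(chg f - 1) % 3, (chg f - 2) % 3} := by
          ext r
          simp only [Set.mem_setOf_eq, Set.mem_insert_iff, Set.mem_singleton_iff]
          constructor
          · rintro ⟨g, hg, rfl⟩
            rw [hopt g hg]
            rcases (move_chg hg).1 with h | h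
            · exact Or.inl (by rw [h])
            · exact Or.inr (by rw [h])
          · rintro (rfl | rfl)
            · obtain ⟨g, hg, hcg⟩ := exists_move_sub_one hc
              exact ⟨g, hg, by rw [hopt g hg, hcg]⟩
            · obtain ⟨g, hg, hcg⟩ := exists_move_sub_two h2
              exact ⟨g, hg, by rw [hopt g hg, hcg]⟩
        rw [hS, mex_pair (chg f) h2]

lemma chg_le_boundary (f : Fin (x+1) → Bool) :
    chg f ≤ boundary (pathGraph x) f := by
  classical
  rw [chg_eq_card_chgset, boundary]
  apply Finset.card_le_card_of_injOn (fun i => (i.castSucc, i.succ))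
  · intro i hi
    simp only [Finset.mem_coe, mem_chgset] at hi
    simp only [Finset.mem_coe, Finset.mem_filter, Finset.mem_univ, true_and]
    exact ⟨pg_adj.2 (Or.inl (by simp)), hi⟩
  · intro a _ b _ hab
    have : a.castSucc = b.castSucc := congrArg Prod.fst hab
    exact Fin.castSucc_injective _ this

lemma chg_pathColor : chg (pathColor x) = x := by
  classical
  rw [chg_eq_card_chgset]
  have : chgset (pathColor x) = Finset.univ := by
    ext i
    simp only [mem_chgset, Finset.mem_univ, iff_true, pathColor]
    simp only [Fin.coe_castSucc, Fin.val_succ, ne_eq, decide_eq_decide]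
    omega
  rw [this, Finset.card_univ, Fintype.card_fin]

end PathProof

/-- In two-color FLAG COLORING, the Grundy value of the properly 2-colored path
with `x` edges (the path on `x + 1` vertices) is `x % 3`. -/
theorem path_grundy (x : ℕ) :
    FlagColoring.grundy (pathGraph x) (pathColor x) = x % 3 := by
  rw [FlagColoring.grundy, PathProof.key _ _ (PathProof.chg_le_boundary _),
    PathProof.chg_pathColor]
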